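/- Let x, x' ∈ ℝ^d with ‖x‖ ≤ 1 and ‖x'‖ ≤ 1. Then the family (φ(x)_α · φ(x')_α), indexed over all d-tuples α of non-negative integers, is summable, and Σ_α φ(x)_α · φ(x')_α = 1/(1 − ⟨x, x'⟩/2). In other words, the rational kernel k(x, x') = 1/(1 − ⟨x, x'⟩/2) satisfies k(x, x') = ⟨φ(x), φ(x')⟩_{ℓ²}. -/

import Mathlib

open Finset RealInnerProductSpace

/-- The feature map `φ` of the rational kernel: for `x ∈ ℝ^d` and a multi-index
`α = (α_1,…,α_d)`,
`φ(x)_α = x_1^{α_1}⋯x_d^{α_d} · sqrt(2^{−Σα_i} · (Σα_i)! / Πα_i!)`. -/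
noncomputable def phi {d : ℕ} (x : EuclideanSpace ℝ (Fin d)) (α : Fin d → ℕ) : ℝ :=
  (∏ i, x i ^ α i) *
    Real.sqrt ((2 : ℝ)⁻¹ ^ (∑ i, α i) *
      ((∑ i, α i).factorial : ℝ) / ∏ i, ((α i).factorial : ℝ))


instance fiberFinite (d n : ℕ) : Finite {α : Fin d → ℕ // ∑ i, α i = n} := by
  have h : {α : Fin d → ℕ | ∑ i, α i = n} ⊆ ↑(piAntidiag (univ : Finset (Fin d)) n) := by
    intro α hα
    simp only [Set.mem_setOf_eq] at hα
    simp [Finset.mem_piAntidiag, hα]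
  exact ((piAntidiag (univ : Finset (Fin d)) n).finite_toSet.subset h).to_subtype

lemma fiber_tsum {d : ℕ} (z : Fin d → ℝ) (n : ℕ) :
    ∑' p : {α : Fin d → ℕ // ∑ i, α i = n},
      ((Nat.multinomial Finset.univ p.1 : ℝ) * ∏ i, z i ^ p.1 i) = (∑ i, z i) ^ n := by
  rw [Finset.sum_pow_eq_sum_piAntidiag]
  rw [← Finset.tsum_subtype (piAntidiag (univ : Finset (Fin d)) n)
    (fun α => (Nat.multinomial Finset.univ α : ℝ) * ∏ i, z i ^ α i)]
  have := (Equiv.subtypeEquivRight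
      (fun α : Fin d → ℕ => by simp [Finset.mem_piAntidiag] :
        ∀ α : Fin d → ℕ, (∑ i, α i = n) ↔ α ∈ piAntidiag (univ : Finset (Fin d)) n)).tsum_eq
    (fun p : {α : Fin d → ℕ // α ∈ piAntidiag (univ : Finset (Fin d)) n} =>
      (Nat.multinomial Finset.univ p.1 : ℝ) * ∏ i, z i ^ p.1 i)
  simpa [Equiv.subtypeEquivRight_apply] using this

lemma key {d : ℕ} (z : Fin d → ℝ) (hz : ∑ i, |z i| < 1) :
    Summable (fun α : Fin d → ℕ => (Nat.multinomial Finset.univ α : ℝ) * ∏ i, z i ^ α i) ∧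
    ∑' α : Fin d → ℕ, (Nat.multinomial Finset.univ α : ℝ) * ∏ i, z i ^ α i
      = (1 - ∑ i, z i)⁻¹ := by
  set F : (Fin d → ℕ) → ℝ :=
    fun α => (Nat.multinomial Finset.univ α : ℝ) * ∏ i, z i ^ α i with hF
  set G : (Fin d → ℕ) → ℝ :=
    fun α => (Nat.multinomial Finset.univ α : ℝ) * ∏ i, |z i| ^ α i with hG
  have habs : ∀ α, |F α| = G α := by
    intro α
    simp [hF, hG, abs_mul, Finset.abs_prod, abs_pow, Nat.abs_cast]
  have hr0 : (0 : ℝ) ≤ ∑ i, |z i| := Finset.sum_nonneg fun i _ => abs_nonneg _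
  set σ : (Σ n : ℕ, {α : Fin d → ℕ // ∑ i, α i = n}) ≃ (Fin d → ℕ) :=
    Equiv.sigmaFiberEquiv (fun α : Fin d → ℕ => ∑ i, α i) with hσ
  have hGσ : Summable (G ∘ σ) := by
    rw [summable_sigma_of_nonneg]
    · constructor
      · intro n
        exact Summable.of_finite
      · have : (fun n : ℕ => ∑' c : {α : Fin d → ℕ // ∑ i, α i = n}, (G ∘ σ) ⟨n, c⟩)
            = fun n : ℕ => (∑ i, |z i|) ^ n := by
          funext n
          exact fiber_tsum (fun i => |z i|) n
        rw [this]
        exact summable_geometric_of_lt_one hr0 hz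
    · rintro ⟨n, c⟩
      simp only [Function.comp_apply, hG]
      positivity
  have hGsum : Summable G := σ.summable_iff.mp hGσ
  have hFsum : Summable F := by
    apply Summable.of_abs
    exact hGsum.congr fun α => (habs α).symm
  refine ⟨hFsum, ?_⟩
  have hFσ : Summable (F ∘ σ) := σ.summable_iff.mpr hFsum
  calc ∑' α, F α = ∑' p, (F ∘ σ) p := (σ.tsum_eq F).symm
    _ = ∑' n, ∑' c : {α : Fin d → ℕ // ∑ i, α i = n}, (F ∘ σ) ⟨n, c⟩ := hFσ.tsum_sigma
    _ = ∑' n : ℕ, (∑ i, z i) ^ n := tsum_congr fun n => fiber_tsum z n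
    _ = (1 - ∑ i, z i)⁻¹ := by
        apply tsum_geometric_of_norm_lt_one
        rw [Real.norm_eq_abs]
        exact lt_of_le_of_lt (Finset.abs_sum_le_sum_abs _ _) hz

lemma phi_mul_phi {d : ℕ} (x x' : EuclideanSpace ℝ (Fin d)) (α : Fin d → ℕ) :
    (((∏ i, x i ^ α i) *
    Real.sqrt ((2 : ℝ)⁻¹ ^ (∑ i, α i) *
      ((∑ i, α i).factorial : ℝ) / ∏ i, ((α i).factorial : ℝ))) *
    ((∏ i, x' i ^ α i) *
    Real.sqrt ((2 : ℝ)⁻¹ ^ (∑ i, α i) *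
      ((∑ i, α i).factorial : ℝ) / ∏ i, ((α i).factorial : ℝ)))) =
    (Nat.multinomial Finset.univ α : ℝ) * ∏ i, (x i * x' i / 2) ^ α i := by
  set c : ℝ := (2 : ℝ)⁻¹ ^ (∑ i, α i) *
      ((∑ i, α i).factorial : ℝ) / ∏ i, ((α i).factorial : ℝ) with hc
  have hc0 : 0 ≤ c := by
    rw [hc]; positivity
  have h1 : (∏ i, x i ^ α i) * Real.sqrt c * ((∏ i, x' i ^ α i) * Real.sqrt c)
      = (∏ i, x i ^ α i) * (∏ i, x' i ^ α i) * c := by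
    rw [show (∏ i, x i ^ α i) * Real.sqrt c * ((∏ i, x' i ^ α i) * Real.sqrt c)
        = (∏ i, x i ^ α i) * (∏ i, x' i ^ α i) * (Real.sqrt c * Real.sqrt c) by ring,
      Real.mul_self_sqrt hc0]
  rw [h1]
  have hmult : (Nat.multinomial Finset.univ α : ℝ)
      = ((∑ i, α i).factorial : ℝ) / ∏ i, ((α i).factorial : ℝ) := by
    have hspec := Nat.multinomial_spec (Finset.univ : Finset (Fin d)) α
    have hne : (∏ i, ((α i).factorial : ℝ)) ≠ 0 := by positivity
    rw [eq_div_iff hne, mul_comm]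
    exact_mod_cast congrArg (Nat.cast : ℕ → ℝ) hspec
  have hprod : ∏ i, (x i * x' i / 2) ^ α i
      = (∏ i, x i ^ α i) * (∏ i, x' i ^ α i) * (2 : ℝ)⁻¹ ^ (∑ i, α i) := by
    rw [← Finset.prod_pow_eq_pow_sum, ← Finset.prod_mul_distrib, ← Finset.prod_mul_distrib]
    congr 1; funext i
    rw [div_pow, mul_pow, div_eq_mul_inv, inv_pow]
  rw [hprod, hmult, hc]
  ring


/-- For `‖x‖ ≤ 1`, `‖x'‖ ≤ 1` the family `(φ(x)_α · φ(x')_α)` is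
summable with sum `1/(1 − ⟨x,x'⟩/2)`, i.e. the rational kernel
`k(x,x') = 1/(1 − ⟨x,x'⟩/2)` equals `⟨φ(x), φ(x')⟩_{ℓ²}`. -/
theorem rational_kernel_eq_inner_phi {d : ℕ} (x x' : EuclideanSpace ℝ (Fin d))
    (hx : ‖x‖ ≤ 1) (hx' : ‖x'‖ ≤ 1) :
    Summable (fun α : Fin d → ℕ => phi x α * phi x' α) ∧
    (∑' α : Fin d → ℕ, phi x α * phi x' α) = 1 / (1 - ⟪x, x'⟫ / 2) := by
  set z : Fin d → ℝ := fun i => x i * x' i / 2 with hzdef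
  have hpt : ∀ α : Fin d → ℕ, phi x α * phi x' α
      = (Nat.multinomial Finset.univ α : ℝ) * ∏ i, z i ^ α i := fun α =>
    phi_mul_phi x x' α
  -- Cauchy–Schwarz for the componentwise-absolute-value vectors
  set xa : EuclideanSpace ℝ (Fin d) := WithLp.toLp 2 (fun i => |x i|) with hxa
  set xa' : EuclideanSpace ℝ (Fin d) := WithLp.toLp 2 (fun i => |x' i|) with hxa'
  have hnxa : ‖xa‖ = ‖x‖ := by
    rw [EuclideanSpace.norm_eq, EuclideanSpace.norm_eq]
    congr 1
    exact Finset.sum_congr rfl fun i _ => by simp [hxa, Real.norm_eq_abs, abs_abs]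
  have hnxa' : ‖xa'‖ = ‖x'‖ := by
    rw [EuclideanSpace.norm_eq, EuclideanSpace.norm_eq]
    congr 1
    exact Finset.sum_congr rfl fun i _ => by simp [hxa', Real.norm_eq_abs, abs_abs]
  have hcs : ∑ i, |x i * x' i| ≤ 1 := by
    have h1 : ⟪xa, xa'⟫ ≤ ‖xa‖ * ‖xa'‖ := real_inner_le_norm xa xa'
    rw [hnxa, hnxa'] at h1
    have h2 : ‖x‖ * ‖x'‖ ≤ 1 := by
      calc ‖x‖ * ‖x'‖ ≤ 1 * 1 :=
        mul_le_mul hx hx' (norm_nonneg _) zero_le_one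
      _ = 1 := by ring
    have h3 : ⟪xa, xa'⟫ = ∑ i, |x i * x' i| := by
      simp [PiLp.inner_apply, RCLike.inner_apply, hxa, hxa', abs_mul, mul_comm]
    linarith
  have hz : ∑ i, |z i| < 1 := by
    have : ∑ i, |z i| = (∑ i, |x i * x' i|) / 2 := by
      rw [Finset.sum_div]
      exact Finset.sum_congr rfl fun i _ => by
        rw [hzdef]; simp [abs_div]
    rw [this]
    linarith
  have hk := key z hz
  have hsum : ∑ i, z i = ⟪x, x'⟫ / 2 := by
    simp only [hzdef]
    rw [← Finset.sum_div]
    simp [PiLp.inner_apply, RCLike.inner_apply, mul_comm]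
  constructor
  · exact (hk.1.congr fun α => (hpt α).symm)
  · calc ∑' α : Fin d → ℕ, phi x α * phi x' α
        = ∑' α : Fin d → ℕ, (Nat.multinomial Finset.univ α : ℝ) * ∏ i, z i ^ α i :=
          tsum_congr hpt
      _ = (1 - ∑ i, z i)⁻¹ := hk.2
      _ = 1 / (1 - ⟪x, x'⟫ / 2) := by rw [hsum, one_div]
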